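/- Let a₁,a₂,a₃,b₁,b₂,b₃ be real numbers with a₁a₂+a₁a₃+a₂a₃ > 0 and (a₁+a₂)(a₁+a₃)(a₂+a₃) = b₁b₂b₃, and let J be the 3-node ring Jacobian, regarded as a complex matrix. Set ω = √(a₁a₂+a₁a₃+a₂a₃). Then b₁ ≠ 0 and b₂ ≠ 0, and the complex vector v = (1, (iω−a₁)/b₁, ((iω−a₁)/b₁)·((iω−a₂)/b₂)) satisfies J·v = iω·v; in particular v is an eigenvector of J for the eigenvalue iω, and its complex conjugate is an eigenvector for −iω. -/

import Mathlib

/-- The 3-node ring Jacobian: rows (a₁,b₁,0), (0,a₂,b₂), (b₃,0,a₃). -/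
def ringJacobian3 (a₁ a₂ a₃ b₁ b₂ b₃ : ℝ) : Matrix (Fin 3) (Fin 3) ℝ :=
  !![a₁, b₁, 0; 0, a₂, b₂; b₃, 0, a₃]

theorem eigenvector_imaginary_eigenvalue_ringJacobian3 (a₁ a₂ a₃ b₁ b₂ b₃ : ℝ)
    (h₁ : 0 < a₁ * a₂ + a₁ * a₃ + a₂ * a₃)
    (h₂ : (a₁ + a₂) * (a₁ + a₃) * (a₂ + a₃) = b₁ * b₂ * b₃) :
    b₁ ≠ 0 ∧ b₂ ≠ 0 ∧
    (let ω : ℝ := Real.sqrt (a₁ * a₂ + a₁ * a₃ + a₂ * a₃)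
     let v : Fin 3 → ℂ := ![1, (Complex.I * ω - a₁) / b₁,
       ((Complex.I * ω - a₁) / b₁) * ((Complex.I * ω - a₂) / b₂)]
     ((ringJacobian3 a₁ a₂ a₃ b₁ b₂ b₃).map Complex.ofReal).mulVec v
        = (Complex.I * ω) • v ∧
     v ≠ 0 ∧
     ((ringJacobian3 a₁ a₂ a₃ b₁ b₂ b₃).map Complex.ofReal).mulVec
        (fun j => starRingEnd ℂ (v j)) = (-(Complex.I * ω)) • fun j => starRingEnd ℂ (v j)) := by
  have hprod : (a₁ + a₂) * (a₁ + a₃) * (a₂ + a₃) ≠ 0 := by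
    intro h
    rcases mul_eq_zero.mp h with h' | h3
    · rcases mul_eq_zero.mp h' with h12 | h13
      · nlinarith [sq_nonneg a₁]
      · nlinarith [sq_nonneg a₁]
    · have ha : a₃ = -a₂ := by linarith
      rw [ha] at h₁
      nlinarith [sq_nonneg a₂]
  have hb₁ : b₁ ≠ 0 := by intro h; apply hprod; rw [h₂, h]; ring
  have hb₂ : b₂ ≠ 0 := by intro h; apply hprod; rw [h₂, h]; ring
  refine ⟨hb₁, hb₂, ?_⟩
  intro ω v
  have hω2r : ω ^ 2 = a₁ * a₂ + a₁ * a₃ + a₂ * a₃ := Real.sq_sqrt h₁.le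
  have hω2 : (ω : ℂ) ^ 2 = (a₁ : ℂ) * a₂ + a₁ * a₃ + a₂ * a₃ := by
    exact_mod_cast congrArg Complex.ofReal hω2r
  have hb₁' : (b₁ : ℂ) ≠ 0 := by exact_mod_cast hb₁
  have hb₂' : (b₂ : ℂ) ≠ 0 := by exact_mod_cast hb₂
  have h₂' : ((a₁ : ℂ) + a₂) * (a₁ + a₃) * (a₂ + a₃) = b₁ * b₂ * b₃ := by
    exact_mod_cast h₂
  have hu : (Complex.I * (ω : ℂ)) ^ 2 = -((a₁ : ℂ) * a₂ + a₁ * a₃ + a₂ * a₃) := by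
    rw [mul_pow, Complex.I_sq, hω2]; ring
  refine ⟨?_, ?_, ?_⟩
  · funext j
    fin_cases j <;>
      simp [ringJacobian3, Matrix.mulVec, dotProduct, Fin.sum_univ_three, v] <;>
      field_simp
    · ring
    · ring
    · linear_combination ((a₁ : ℂ) + a₂ + a₃ - Complex.I * ω) * hu - h₂'
  · intro h
    have := congrFun h 0
    simp [v] at this
  · funext j
    fin_cases j <;>
      simp [ringJacobian3, Matrix.mulVec, dotProduct, Fin.sum_univ_three, v, map_div₀,
        Complex.conj_ofReal] <;>
      field_simp
    · ring
    · ring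
    · linear_combination ((a₁ : ℂ) + a₂ + a₃ + Complex.I * ω) * hu - h₂'
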